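/- For every subset B ⊆ A and all traces u, v over a dependency alphabet, the B-view satisfies view_B(uv) = view_B(u·view_B(v)). -/

import Mathlib

namespace MazTrace

variable {A : Type*}

/-- Smallest equivalence on words over `A` generated by commuting two adjacent
independent letters (`a I b` iff `¬ D a b`). -/
inductive TraceRel (D : A → A → Prop) : List A → List A → Prop
  | refl (u : List A) : TraceRel D u u
  | swap (u v : List A) (a b : A) (h : ¬ D a b) :
      TraceRel D (u ++ a :: b :: v) (u ++ b :: a :: v)
  | symm {u v : List A} : TraceRel D u v → TraceRel D v u
  | trans {u v w : List A} : TraceRel D u v → TraceRel D v w → TraceRel D u w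

theorem TraceRel.append_right {D : A → A → Prop} {u u' : List A} (w : List A)
    (h : TraceRel D u u') : TraceRel D (u ++ w) (u' ++ w) := by
  induction h with
  | refl u => exact .refl _
  | swap x y a b hab =>
      simpa [List.append_assoc] using TraceRel.swap (D := D) x (y ++ w) a b hab
  | symm _ ih => exact ih.symm
  | trans _ _ ih1 ih2 => exact ih1.trans ih2

theorem TraceRel.append_left {D : A → A → Prop} {v v' : List A} (w : List A)
    (h : TraceRel D v v') : TraceRel D (w ++ v) (w ++ v') := by
  induction h with
  | refl u => exact .refl _
  | swap x y a b hab =>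
      simpa [List.append_assoc] using TraceRel.swap (D := D) (w ++ x) y a b hab
  | symm _ ih => exact ih.symm
  | trans _ _ ih1 ih2 => exact ih1.trans ih2

def traceSetoid (D : A → A → Prop) : Setoid (List A) :=
  ⟨TraceRel D, ⟨TraceRel.refl, TraceRel.symm, TraceRel.trans⟩⟩

/-- A Mazurkiewicz trace: an equivalence class of words. -/
def Trace (D : A → A → Prop) : Type _ := Quotient (traceSetoid D)

namespace Trace

variable {D : A → A → Prop}

/-- The trace of a word. -/
def mk (D : A → A → Prop) (u : List A) : Trace D := Quotient.mk (traceSetoid D) u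

/-- The empty trace. -/
instance : One (Trace D) := ⟨mk D []⟩

/-- Concatenation of traces, induced by concatenation of words. -/
instance : Mul (Trace D) :=
  ⟨fun s t => Quotient.liftOn₂ s t (fun u v => mk D (u ++ v))
    (fun _ _ _ _ hu hv =>
      Quotient.sound ((hu.append_right _).trans (TraceRel.append_left _ hv)))⟩

instance : Nonempty (Trace D) := ⟨1⟩

/-- Length of a trace: the length of any of its linearizations. -/
def length (t : Trace D) : ℕ :=
  Quotient.liftOn t List.length (by
    intro u v h
    induction h with
    | refl u => rfl
    | swap x y a b hab => simp
    | symm _ ih => exact ih.symm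
    | trans _ _ ih1 ih2 => exact ih1.trans ih2)

/-- The set of letters of a trace. -/
def alph (t : Trace D) : Set A :=
  Quotient.liftOn t (fun u => {a | a ∈ u}) (by
    intro u v h
    induction h with
    | refl u => rfl
    | swap x y a b hab => ext c; simp [List.mem_append]; tauto
    | symm _ ih => exact ih.symm
    | trans _ _ ih1 ih2 => exact ih1.trans ih2)

/-- Prefix order on traces: `s ⊑ t` iff `s * w = t` for some trace `w`. -/
def Prefix (s t : Trace D) : Prop := ∃ w, s * w = t

/-- `t I B` : every letter of the trace `t` is independent of every element of `B`. -/
def IndepSet (t : Trace D) (B : Set A) : Prop := ∀ a ∈ t.alph, ∀ b ∈ B, ¬ D a b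

/-- `s I t` : every letter of `s` is independent of every letter of `t`. -/
def Indep (s t : Trace D) : Prop := ∀ a ∈ s.alph, ∀ b ∈ t.alph, ¬ D a b

/-- `a I t` : the letter `a` is independent of every letter of the trace `t`. -/
def IndepLetter (a : A) (t : Trace D) : Prop := ∀ c ∈ t.alph, ¬ D a c

/-- `w` is the `B`-view of `t`: the shortest prefix of `t` such that `t = w·v`
for some trace `v` with `v I B`. -/
def IsView (B : Set A) (t w : Trace D) : Prop :=
  (∃ v, w * v = t ∧ v.IndepSet B) ∧
  ∀ w' v', w' * v' = t → v'.IndepSet B → w.length ≤ w'.length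

/-- The `B`-view of a trace. -/
noncomputable def view (B : Set A) (t : Trace D) : Trace D :=
  Classical.epsilon (IsView B t)

/-- A trace is `B`-prime if every linearization of it ends with a letter of `B`. -/
def IsBPrime (B : Set A) (t : Trace D) : Prop :=
  ∀ u : List A, mk D u = t → ∀ a : A, u.getLast? = some a → a ∈ B

/-- A trace is prime if all its linearizations have the same last letter
(the empty trace counts as prime). -/
def IsPrime (t : Trace D) : Prop :=
  ∀ u v : List A, mk D u = t → mk D v = t → u.getLast? = v.getLast?

end Trace

end MazTrace

namespace MazTrace

section Aux

variable {A : Type*} {D : A → A → Prop}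

/-! ### Word-level lemmas -/

section Words

variable [DecidableEq A]

set_option linter.unusedSectionVars false

/-- Projection of a word to the letters `{a, b}`. -/
def proj (a b : A) (u : List A) : List A := u.filter (fun x => x = a ∨ x = b)

lemma proj_append (a b : A) (u v : List A) :
    proj a b (u ++ v) = proj a b u ++ proj a b v := by simp [proj]

lemma mem_proj {a b x : A} {u : List A} :
    x ∈ proj a b u ↔ x ∈ u ∧ (x = a ∨ x = b) := by
  simp [proj, List.mem_filter]

lemma TraceRel.proj_eq (hrefl : ∀ a, D a a) (hsymm : ∀ a b, D a b → D b a)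
    {u v : List A} (h : TraceRel D u v) (a b : A) (hab : D a b) :
    proj a b u = proj a b v := by
  induction h with
  | refl u => rfl
  | swap x y p q hpq =>
      have hne : p ≠ q := by rintro rfl; exact hpq (hrefl p)
      have hnot : ¬ ((p = a ∨ p = b) ∧ (q = a ∨ q = b)) := by
        rintro ⟨hp, hq⟩
        rcases hp with rfl | rfl <;> rcases hq with rfl | rfl
        · exact hne rfl
        · exact hpq hab
        · exact hpq (hsymm _ _ hab)
        · exact hne rfl
      have key : proj a b (p :: q :: y) = proj a b (q :: p :: y) := by
        by_cases hp : p = a ∨ p = b <;> by_cases hq : q = a ∨ q = b <;>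
          simp [proj, List.filter_cons, hp, hq] at hnot ⊢
      simp only [proj_append]
      rw [show proj a b (p :: q :: y) = proj a b (q :: p :: y) from key]
  | symm _ ih => exact ih.symm
  | trans _ _ ih1 ih2 => exact ih1.trans ih2

lemma moveFront (hsymm : ∀ a b, D a b → D b a) (c : A) :
    ∀ (v₁ v₂ : List A), (∀ y ∈ v₁, ¬ D c y) →
      TraceRel D (v₁ ++ c :: v₂) (c :: (v₁ ++ v₂))
  | [], v₂, _ => .refl _
  | y :: v₁, v₂, h => by
      have h1 : TraceRel D ([y] ++ (v₁ ++ c :: v₂)) ([y] ++ (c :: (v₁ ++ v₂))) :=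
        TraceRel.append_left [y] (moveFront hsymm c v₁ v₂ fun z hz => h z (.tail _ hz))
      have h2 : TraceRel D ([] ++ y :: c :: (v₁ ++ v₂)) ([] ++ c :: y :: (v₁ ++ v₂)) :=
        TraceRel.swap [] _ y c (fun hyc => h y (.head _) (hsymm _ _ hyc))
      simpa using h1.trans h2

lemma exists_first (x : A) :
    ∀ (v : List A), x ∈ v → ∃ v₁ v₂, v = v₁ ++ x :: v₂ ∧ x ∉ v₁
  | [], h => absurd h (by simp)
  | y :: v, h => by
      by_cases hxy : x = y
      · exact ⟨[], v, by simp [hxy], by simp⟩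
      · obtain ⟨v₁, v₂, rfl, hx⟩ := exists_first x v (by
          rcases h with _ | h
          · exact absurd rfl hxy
          · assumption)
        exact ⟨y :: v₁, v₂, by simp, by simp [hx, Ne.symm, hxy]⟩

lemma proj_complete (hrefl : ∀ a, D a a) (hsymm : ∀ a b, D a b → D b a) :
    ∀ (u v : List A), (∀ a b, D a b → proj a b u = proj a b v) → TraceRel D u v
  | [], v, h => by
      have : v = [] := by
        rcases v with _ | ⟨y, v⟩
        · rfl
        · exfalso
          have := h y y (hrefl y)
          simp [proj, List.filter_cons] at this
      exact this ▸ .refl _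
  | x :: u, v, h => by
      have hxv : x ∈ v := by
        have := h x x (hrefl x)
        have hx : x ∈ proj x x (x :: u) := by simp [mem_proj]
        rw [this] at hx
        exact (mem_proj.1 hx).1
      obtain ⟨v₁, v₂, rfl, hxv₁⟩ := exists_first x v hxv
      have hind : ∀ y ∈ v₁, ¬ D x y := by
        intro y hy hDxy
        have hyx : y ≠ x := fun hh => hxv₁ (hh ▸ hy)
        have hproj := h x y hDxy
        have h1 : proj x y (x :: u) = x :: proj x y u := by
          simp [proj, List.filter_cons]
        have hy1 : y ∈ proj x y v₁ := mem_proj.2 ⟨hy, Or.inr rfl⟩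
        rcases hz : proj x y v₁ with _ | ⟨z, zs⟩
        · rw [hz] at hy1; simp at hy1
        · have hzmem : z ∈ proj x y v₁ := by rw [hz]; exact List.mem_cons_self
          have hzv₁ : z ∈ v₁ := (mem_proj.1 hzmem).1
          have h2 : proj x y (v₁ ++ x :: v₂) = z :: (zs ++ proj x y (x :: v₂)) := by
            rw [proj_append, hz]; simp
          rw [h1, h2] at hproj
          have : x = z := by injection hproj
          exact hxv₁ (this ▸ hzv₁)
      -- all letters of v₁ lying in a dependent pair with x are excluded as above
      have hmain : TraceRel D u (v₁ ++ v₂) := by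
        apply proj_complete hrefl hsymm
        intro a b hab
        have hproj := h a b hab
        by_cases hx : x = a ∨ x = b
        · have hv₁ : proj a b v₁ = [] := by
            rw [List.eq_nil_iff_forall_not_mem]
            intro z hzmem
            obtain ⟨hzv₁, hz⟩ := mem_proj.1 hzmem
            have hzx : z ≠ x := fun hh => hxv₁ (hh ▸ hzv₁)
            have hD : D x z := by
              rcases hx with rfl | rfl <;> rcases hz with rfl | rfl
              · exact absurd rfl hzx
              · exact hab
              · exact hsymm _ _ hab
              · exact absurd rfl hzx
            exact hind z hzv₁ hD
          have h1 : proj a b (x :: u) = x :: proj a b u := by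
            simp [proj, List.filter_cons, hx]
          have h2 : proj a b (v₁ ++ x :: v₂) = x :: proj a b v₂ := by
            rw [proj_append, hv₁]; simp [proj, List.filter_cons, hx]
          rw [h1, h2] at hproj
          have h3 : proj a b (v₁ ++ v₂) = proj a b v₂ := by
            rw [proj_append, hv₁]; simp
          rw [h3]
          injection hproj
        · have h1 : proj a b (x :: u) = proj a b u := by
            simp [proj, List.filter_cons, hx]
          have h2 : proj a b (v₁ ++ x :: v₂) = proj a b (v₁ ++ v₂) := by
            rw [proj_append, proj_append]
            simp [proj, List.filter_cons, hx]
          rw [← h1, ← h2]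
          exact hproj
      have step1 : TraceRel D (x :: u) (x :: (v₁ ++ v₂)) :=
        TraceRel.append_left [x] hmain
      have step2 : TraceRel D (v₁ ++ x :: v₂) (x :: (v₁ ++ v₂)) :=
        moveFront hsymm x v₁ v₂ hind
      exact step1.trans step2.symm

lemma cancel_last (hrefl : ∀ a, D a a) (hsymm : ∀ a b, D a b → D b a)
    {u v : List A} {c : A} (h : TraceRel D (u ++ [c]) (v ++ [c])) :
    TraceRel D u v := by
  apply proj_complete hrefl hsymm
  intro a b hab
  have := h.proj_eq hrefl hsymm a b hab
  rw [proj_append, proj_append] at this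
  exact List.append_cancel_right this

lemma cancel_head (hrefl : ∀ a, D a a) (hsymm : ∀ a b, D a b → D b a)
    {u v : List A} {c : A} (h : TraceRel D (c :: u) (c :: v)) :
    TraceRel D u v := by
  apply proj_complete hrefl hsymm
  intro a b hab
  have := h.proj_eq hrefl hsymm a b hab
  by_cases hc : c = a ∨ c = b <;>
    simp only [proj, List.filter_cons, hc] at this <;> simp_all [proj]

lemma TraceRel.reverse (hsymm : ∀ a b, D a b → D b a)
    {u v : List A} (h : TraceRel D u v) : TraceRel D u.reverse v.reverse := by
  induction h with
  | refl u => exact .refl _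
  | swap x y p q hpq =>
      have : TraceRel D (y.reverse ++ q :: p :: x.reverse)
          (y.reverse ++ p :: q :: x.reverse) :=
        TraceRel.swap _ _ q p (fun hqp => hpq (hsymm _ _ hqp))
      simpa using this
  | symm _ ih => exact ih.symm
  | trans _ _ ih1 ih2 => exact ih1.trans ih2

/-- First-occurrence extraction. -/
lemma first_extract (hrefl : ∀ a, D a a) (hsymm : ∀ a b, D a b → D b a)
    {z t : List A} {c : A} (h : TraceRel D z (c :: t)) :
    ∃ z₁ z₂, z = z₁ ++ c :: z₂ ∧ (∀ y ∈ z₁, ¬ D c y) ∧ TraceRel D (z₁ ++ z₂) t := by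
  have hcz : c ∈ z := by
    have := h.proj_eq hrefl hsymm c c (hrefl c)
    have hc : c ∈ proj c c (c :: t) := by simp [mem_proj]
    rw [← this] at hc
    exact (mem_proj.1 hc).1
  obtain ⟨z₁, z₂, rfl, hcz₁⟩ := exists_first c z hcz
  have hind : ∀ y ∈ z₁, ¬ D c y := by
    intro y hy hDcy
    have hyc : y ≠ c := fun hh => hcz₁ (hh ▸ hy)
    have hproj := h.proj_eq hrefl hsymm c y hDcy
    have h1 : proj c y (c :: t) = c :: proj c y t := by
      simp [proj, List.filter_cons]
    have hy1 : y ∈ proj c y z₁ := mem_proj.2 ⟨hy, Or.inr rfl⟩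
    rcases hz : proj c y z₁ with _ | ⟨w, ws⟩
    · rw [hz] at hy1; simp at hy1
    · have hwmem : w ∈ proj c y z₁ := by rw [hz]; exact List.mem_cons_self
      have hwz₁ : w ∈ z₁ := (mem_proj.1 hwmem).1
      have h2 : proj c y (z₁ ++ c :: z₂) = w :: (ws ++ proj c y (c :: z₂)) := by
        rw [proj_append, hz]; simp
      rw [h1, h2] at hproj
      injection hproj with h' _
      exact hcz₁ (h' ▸ hwz₁)
  refine ⟨z₁, z₂, rfl, hind, ?_⟩
  have step : TraceRel D (z₁ ++ c :: z₂) (c :: (z₁ ++ z₂)) :=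
    moveFront hsymm c z₁ z₂ hind
  exact cancel_head hrefl hsymm (step.symm.trans h)

/-- Last-occurrence extraction. -/
lemma last_extract (hrefl : ∀ a, D a a) (hsymm : ∀ a b, D a b → D b a)
    {z t : List A} {c : A} (h : TraceRel D z (t ++ [c])) :
    ∃ z₁ z₂, z = z₁ ++ c :: z₂ ∧ (∀ y ∈ z₂, ¬ D c y) ∧ TraceRel D (z₁ ++ z₂) t := by
  have hrev : TraceRel D z.reverse (c :: t.reverse) := by
    have := h.reverse hsymm
    simpa using this
  obtain ⟨y₁, y₂, hy, hind, hrel⟩ := first_extract hrefl hsymm hrev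
  refine ⟨y₂.reverse, y₁.reverse, ?_, ?_, ?_⟩
  · have : z.reverse.reverse = (y₁ ++ c :: y₂).reverse := by rw [hy]
    simpa using this
  · intro a ha; exact hind a (by simpa using ha)
  · have := (hrel.reverse hsymm)
    simpa using this

lemma moveBack (hsymm : ∀ a b, D a b → D b a) (c : A)
    (v₁ : List A) (h : ∀ y ∈ v₁, ¬ D c y) :
    TraceRel D (c :: v₁) (v₁ ++ [c]) := by
  have := moveFront hsymm c v₁ [] h
  simpa using this.symm

/-- Key splitting lemma: if `w ++ s ≈ t ++ [c]` then the distinguished final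
occurrence of `c` lies either in `s` or in `w`. -/
lemma extract_split (hrefl : ∀ a, D a a) (hsymm : ∀ a b, D a b → D b a)
    {w s t : List A} {c : A} (h : TraceRel D (w ++ s) (t ++ [c])) :
    (∃ s', TraceRel D s (s' ++ [c]) ∧ TraceRel D (w ++ s') t) ∨
    (∃ w', TraceRel D w (w' ++ [c]) ∧ TraceRel D (w' ++ s) t) := by
  obtain ⟨z₁, z₂, heq, hind, hrel⟩ := last_extract hrefl hsymm h
  rcases List.append_eq_append_iff.1 heq with ⟨a, ha₁, ha₂⟩ | ⟨b, hb₁, hb₂⟩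
  · -- z₁ = w ++ a, s = a ++ c :: z₂
    left
    refine ⟨a ++ z₂, ?_, ?_⟩
    · have step : TraceRel D (a ++ c :: z₂) (a ++ (z₂ ++ [c])) :=
        TraceRel.append_left a (moveBack hsymm c z₂ hind)
      rw [ha₂]
      simpa [List.append_assoc] using step
    · have : w ++ (a ++ z₂) = z₁ ++ z₂ := by rw [ha₁]; simp [List.append_assoc]
      rw [this]; exact hrel
  · -- w = z₁ ++ b, c :: z₂ = b ++ s
    rcases b with _ | ⟨b0, b'⟩
    · -- b = [], so w = z₁ and s = c :: z₂
      left
      refine ⟨z₂, ?_, ?_⟩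
      · have hs : s = c :: z₂ := by simpa using hb₂.symm
        rw [hs]; exact moveBack hsymm c z₂ hind
      · have hw : w = z₁ := by simpa using hb₁
        rw [hw]; exact hrel
    · -- b = c :: b', w = z₁ ++ c :: b', z₂ = b' ++ s
      obtain ⟨hb0, hz₂⟩ : c = b0 ∧ z₂ = b' ++ s := by simpa using hb₂
      subst hb0
      right
      refine ⟨z₁ ++ b', ?_, ?_⟩
      · have hindb : ∀ y ∈ b', ¬ D c y := fun y hy =>
          hind y (by rw [hz₂]; exact List.mem_append_left _ hy)
        have step : TraceRel D (z₁ ++ c :: b') (z₁ ++ (b' ++ [c])) :=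
          TraceRel.append_left z₁ (moveBack hsymm c b' hindb)
        rw [hb₁]
        simpa [List.append_assoc] using step
      · have : z₁ ++ b' ++ s = z₁ ++ z₂ := by rw [hz₂]; simp [List.append_assoc]
        rw [this]; exact hrel

end Words

/-! ### Trace-level lemmas -/

namespace Trace

lemma mk_mul_mk (u v : List A) : mk D u * mk D v = mk D (u ++ v) := rfl

lemma mk_eq_mk {u v : List A} : mk D u = mk D v ↔ TraceRel D u v := by
  constructor
  · exact fun h => Quotient.exact h
  · exact fun h => Quotient.sound h

lemma length_mk (u : List A) : (mk D u).length = u.length := rfl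

lemma mem_alph_mk {a : A} {u : List A} : a ∈ (mk D u).alph ↔ a ∈ u := Iff.rfl

lemma exists_mk (t : Trace D) : ∃ u, mk D u = t := Quotient.exists_rep t

lemma one_def : (1 : Trace D) = mk D [] := rfl

protected lemma mul_assoc (s t r : Trace D) : s * t * r = s * (t * r) := by
  obtain ⟨a, rfl⟩ := exists_mk s
  obtain ⟨b, rfl⟩ := exists_mk t
  obtain ⟨c, rfl⟩ := exists_mk r
  simp only [mk_mul_mk, List.append_assoc]

protected lemma mul_one (t : Trace D) : t * 1 = t := by
  obtain ⟨a, rfl⟩ := exists_mk t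
  rw [one_def, mk_mul_mk, List.append_nil]

lemma indepSet_mk {u : List A} {B : Set A} :
    (mk D u).IndepSet B ↔ ∀ a ∈ u, ∀ b ∈ B, ¬ D a b := Iff.rfl

lemma indepSet_one {B : Set A} : (1 : Trace D).IndepSet B := by
  rw [one_def, indepSet_mk]; simp

lemma IndepSet.mul {s t : Trace D} {B : Set A}
    (hs : s.IndepSet B) (ht : t.IndepSet B) : (s * t).IndepSet B := by
  obtain ⟨a, rfl⟩ := exists_mk s
  obtain ⟨b, rfl⟩ := exists_mk t
  rw [mk_mul_mk, indepSet_mk]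
  intro x hx
  rcases List.mem_append.1 hx with hxa | hxb
  · exact hs x hxa
  · exact ht x hxb

lemma exists_isView (B : Set A) (t : Trace D) : ∃ w, IsView B t w := by
  classical
  have hne : ∃ n, ∃ w v : Trace D, w * v = t ∧ v.IndepSet B ∧ w.length = n :=
    ⟨t.length, t, 1, Trace.mul_one t, indepSet_one, rfl⟩
  obtain ⟨w, v, hwv, hv, hlen⟩ := Nat.find_spec hne
  refine ⟨w, ⟨v, hwv, hv⟩, ?_⟩
  intro w' v' h1 h2
  rw [hlen]
  exact Nat.find_min' hne ⟨w', v', h1, h2, rfl⟩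

lemma isView_view (B : Set A) (t : Trace D) : IsView B t (Trace.view B t) :=
  Classical.epsilon_spec (exists_isView B t)

lemma length_eq_of_traceRel {u v : List A} (h : TraceRel D u v) :
    (mk D u).length = (mk D v).length := congrArg Trace.length (mk_eq_mk.2 h)

/-- The single-letter absorption lemma. -/
lemma isView_mul_single [DecidableEq A]
    (hrefl : ∀ a, D a a) (hsymm : ∀ a b, D a b → D b a)
    {B : Set A} {c : A} (hc : ∀ b ∈ B, ¬ D c b) (t : Trace D) :
    IsView B (t * mk D [c]) = IsView B t := by
  have hcB : (mk D [c] : Trace D).IndepSet B := by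
    rw [indepSet_mk]
    intro a ha b hb
    have : a = c := by simpa using ha
    exact this ▸ hc b hb
  funext w
  apply propext
  obtain ⟨tl, rfl⟩ := exists_mk t
  obtain ⟨wl, rfl⟩ := exists_mk w
  constructor
  · rintro ⟨⟨s, hws, hsB⟩, hmin⟩
    obtain ⟨sl, rfl⟩ := exists_mk s
    have hrel : TraceRel D (wl ++ sl) (tl ++ [c]) :=
      mk_eq_mk.1 (by rw [← mk_mul_mk, ← mk_mul_mk, hws])
    rcases extract_split hrefl hsymm hrel with ⟨s', hs₁, hs₂⟩ | ⟨w', hw₁, hw₂⟩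
    · -- c came from s
      refine ⟨⟨mk D s', by rw [mk_mul_mk]; exact mk_eq_mk.2 hs₂, ?_⟩, ?_⟩
      · rw [indepSet_mk]
        intro a ha b hb
        have hmem : a ∈ sl := by
          have halph : (mk D sl).alph = (mk D (s' ++ [c])).alph :=
            congrArg Trace.alph (mk_eq_mk.2 hs₁)
          have : a ∈ (mk D (s' ++ [c])).alph := by
            rw [mem_alph_mk]; exact List.mem_append_left _ ha
          rw [← halph, mem_alph_mk] at this
          exact this
        exact hsB a hmem b hb
      · intro w' v' h1 h2
        exact hmin w' (v' * mk D [c])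
          (by rw [← Trace.mul_assoc, h1]) (h2.mul hcB)
    · -- c came from w : contradiction with minimality
      exfalso
      have hmk : mk D w' * mk D sl = mk D tl := by
        rw [mk_mul_mk]; exact mk_eq_mk.2 hw₂
      have hle := hmin (mk D w') (mk D sl * mk D [c])
        (by rw [← Trace.mul_assoc, hmk]) (hsB.mul hcB)
      have hlen : (mk D wl).length = (mk D w').length + 1 := by
        rw [length_eq_of_traceRel hw₁, length_mk, length_mk, List.length_append]
        simp
      omega
  · rintro ⟨⟨s, hws, hsB⟩, hmin⟩
    refine ⟨⟨s * mk D [c], by rw [← Trace.mul_assoc, hws], hsB.mul hcB⟩, ?_⟩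
    intro w' v' h1 h2
    obtain ⟨w'l, rfl⟩ := exists_mk w'
    obtain ⟨v'l, rfl⟩ := exists_mk v'
    have hrel : TraceRel D (w'l ++ v'l) (tl ++ [c]) :=
      mk_eq_mk.1 (by rw [← mk_mul_mk, ← mk_mul_mk, h1])
    rcases extract_split hrefl hsymm hrel with ⟨s', hs₁, hs₂⟩ | ⟨w'', hw₁, hw₂⟩
    · refine hmin (mk D w'l) (mk D s') (by rw [mk_mul_mk]; exact mk_eq_mk.2 hs₂) ?_
      rw [indepSet_mk]
      intro a ha b hb
      have hmem : a ∈ v'l := by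
        have halph : (mk D v'l).alph = (mk D (s' ++ [c])).alph :=
          congrArg Trace.alph (mk_eq_mk.2 hs₁)
        have : a ∈ (mk D (s' ++ [c])).alph := by
          rw [mem_alph_mk]; exact List.mem_append_left _ ha
        rw [← halph, mem_alph_mk] at this
        exact this
      exact h2 a hmem b hb
    · have hle := hmin (mk D w'') (mk D v'l)
        (by rw [mk_mul_mk]; exact mk_eq_mk.2 hw₂) h2
      have hlen : (mk D w'l).length = (mk D w'').length + 1 := by
        rw [length_eq_of_traceRel hw₁, length_mk, length_mk, List.length_append]
        simp
      omega

lemma view_mul_indep [DecidableEq A]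
    (hrefl : ∀ a, D a a) (hsymm : ∀ a b, D a b → D b a) (B : Set A) :
    ∀ (l : List A), (mk D l).IndepSet B → ∀ t : Trace D,
      Trace.view B (t * mk D l) = Trace.view B t := by
  intro l
  induction l using List.reverseRecOn with
  | nil =>
      intro _ t
      rw [show mk D ([] : List A) = (1 : Trace D) from rfl, Trace.mul_one]
  | append_singleton l c ih =>
      intro hl t
      have h1 : (mk D (l ++ [c]) : Trace D) = mk D l * mk D [c] := rfl
      have hc : ∀ b ∈ B, ¬ D c b := fun b hb =>
        hl c (by rw [mem_alph_mk]; simp) b hb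
      have hlB : (mk D l : Trace D).IndepSet B := by
        rw [indepSet_mk]
        intro a ha b hb
        exact hl a (by rw [mem_alph_mk]; exact List.mem_append_left _ ha) b hb
      rw [h1, ← Trace.mul_assoc]
      have hsingle : Trace.view B (t * mk D l * mk D [c]) = Trace.view B (t * mk D l) := by
        unfold Trace.view
        rw [isView_mul_single hrefl hsymm hc (t * mk D l)]
      rw [hsingle, ih hlB t]

end Trace

end Aux

end MazTrace

open MazTrace in
/-- `view_B(uv) = view_B(u · view_B(v))`. -/
theorem view_mul_view {A : Type*} [Finite A] (D : A → A → Prop)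
    (hrefl : ∀ a, D a a) (hsymm : ∀ a b, D a b → D b a)
    (B : Set A) (u v : Trace D) :
    Trace.view B (u * v) = Trace.view B (u * Trace.view B v) := by
  letI := Classical.decEq A
  obtain ⟨⟨r, hr, hrB⟩, -⟩ := Trace.isView_view B v
  obtain ⟨rl, rfl⟩ := Trace.exists_mk r
  have h1 : u * v = u * Trace.view B v * Trace.mk D rl := by
    rw [Trace.mul_assoc, hr]
  rw [h1, Trace.view_mul_indep hrefl hsymm B rl hrB]
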